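/- arXiv:1402.3532 — 2 statements merged into one kernel-verified Lean document; each statement's English description precedes it below -/
import Mathlib

section
/- Let K be a field and let A = {t_4, t_1 t_4, t_2 t_4, t_3 t_4, t_1 t_2 t_4, t_2 t_3 t_4, t_1 t_3 t_4, t_1 t_2 t_3 t_4} ⊆ K[t_1, t_2, t_3, t_4], with toric ideal I_A ⊆ K[x_1,...,x_8] (with x_1 ↦ t_4, x_2 ↦ t_1 t_4, x_3 ↦ t_2 t_4, x_4 ↦ t_3 t_4, x_5 ↦ t_1 t_2 t_4, x_6 ↦ t_2 t_3 t_4, x_7 ↦ t_1 t_3 t_4, x_8 ↦ t_1 t_2 t_3 t_4). Let <_rlex be the reverse lexicographic order induced by the ordering x_4 < x_3 < x_2 < x_1 < x_8 < x_7 < x_6 < x_5. Then the cubic monomial x_2 x_3 x_8 belongs to G(in_{<_rlex}(I_A)); in particular, the reduced Gröbner basis of I_A with respect to <_rlex is not quadratic, even though K[A] is strongly Koszul. -/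
/-!
Common definitions: toric ideals/rings of monomial families, strong Koszulness
with respect to a system of algebra generators, initial ideals with respect to
a relation on exponent vectors, (reduced) Gröbner bases, the (graded) reverse
lexicographic order induced by an ordering of the variables, minimal monomial
generators, and compressedness.
-/

open MvPolynomial

noncomputable section

/-- The total degree of an exponent vector. -/
def expDeg {n : ℕ} (d : Fin n →₀ ℕ) : ℕ := d.sum fun _ e => e

/-- The toric ideal `I_A ⊆ K[x_1,…,x_n]` of the family of monomials
`u i = t^(a i)` in `K[t_1,…,t_d]`: the kernel of `π : x_i ↦ u_i`. -/
def toricIdeal (K : Type) [Field K] {n d : ℕ} (a : Fin n → (Fin d →₀ ℕ)) :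
    Ideal (MvPolynomial (Fin n) K) :=
  RingHom.ker (MvPolynomial.aeval
    (fun i => (MvPolynomial.monomial (a i) (1 : K) : MvPolynomial (Fin d) K)) :
      MvPolynomial (Fin n) K →ₐ[K] MvPolynomial (Fin d) K).toRingHom

/-- The toric ring `K[A] ⊆ K[t_1,…,t_d]` generated by the monomials `t^(a i)`. -/
def toricRing (K : Type) [Field K] {n d : ℕ} (a : Fin n → (Fin d →₀ ℕ)) :
    Subalgebra K (MvPolynomial (Fin d) K) :=
  Algebra.adjoin K (Set.range fun i => (MvPolynomial.monomial (a i) (1 : K)))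

/-- The generator `u_i = t^(a i)`, as an element of the toric ring `K[A]`. -/
def toricGen (K : Type) [Field K] {n d : ℕ} (a : Fin n → (Fin d →₀ ℕ)) (i : Fin n) :
    toricRing K a :=
  ⟨MvPolynomial.monomial (a i) (1 : K), Algebra.subset_adjoin (Set.mem_range_self i)⟩

/-- A commutative ring `R` is strongly Koszul with respect to the system of
generators `u_1,…,u_n` (of its maximal graded ideal) if for every chain
`i_1 < i_2 < ⋯ < i_r` of indices and every `j = 1,…,r` the colon ideal
`(u_{i_1},…,u_{i_{j-1}}) : u_{i_j}` is generated by a subset of `{u_1,…,u_n}`. -/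
def StronglyKoszulWith {R : Type} [CommRing R] {n : ℕ} (u : Fin n → R) : Prop :=
  ∀ (r : ℕ) (c : Fin r → Fin n), StrictMono c → ∀ j : Fin r,
    ∃ S : Set R, S ⊆ Set.range u ∧
      Submodule.colon (Ideal.span ((fun k => u (c k)) '' {k : Fin r | k < j}))
        (Ideal.span {u (c j)}) = Ideal.span S

/-- The toric ring `K[A]` is strongly Koszul (with respect to its monomial
generators `u_1,…,u_n`, which form its distinguished minimal system of
generators of the same degree). -/
def ToricStronglyKoszul (K : Type) [Field K] {n d : ℕ} (a : Fin n → (Fin d →₀ ℕ)) : Prop :=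
  StronglyKoszulWith (toricGen K a)

/-- `dd` is the exponent vector of the initial (leading) monomial of `f` with
respect to the strict comparison `lt` on exponent vectors. -/
def IsInitialExp {K : Type} [Field K] {n : ℕ}
    (lt : (Fin n →₀ ℕ) → (Fin n →₀ ℕ) → Prop)
    (f : MvPolynomial (Fin n) K) (dd : Fin n →₀ ℕ) : Prop :=
  dd ∈ f.support ∧ ∀ d' ∈ f.support, d' ≠ dd → lt d' dd

/-- The initial ideal `in_lt(I)`: the monomial ideal generated by the initial
monomials of the nonzero elements of `I`. -/
def initialIdeal {K : Type} [Field K] {n : ℕ}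
    (lt : (Fin n →₀ ℕ) → (Fin n →₀ ℕ) → Prop)
    (I : Ideal (MvPolynomial (Fin n) K)) : Ideal (MvPolynomial (Fin n) K) :=
  Ideal.span {m | ∃ f ∈ I, ∃ dd, IsInitialExp lt f dd ∧
    m = MvPolynomial.monomial dd (1 : K)}

/-- `G` is the reduced Gröbner basis of `I` with respect to the strict
comparison `lt` (coming from a monomial order): the elements of `G` lie in `I`,
are monic, their initial monomials generate the initial ideal of `I`,
and no monomial occurring in an element of `G` is divisible by the initial
monomial of another element of `G`. -/
def IsReducedGB {K : Type} [Field K] {n : ℕ}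
    (lt : (Fin n →₀ ℕ) → (Fin n →₀ ℕ) → Prop)
    (I : Ideal (MvPolynomial (Fin n) K)) (G : Finset (MvPolynomial (Fin n) K)) : Prop :=
  (∀ g ∈ G, g ∈ I) ∧
  (∀ g ∈ G, ∃ dd, IsInitialExp lt g dd ∧ MvPolynomial.coeff dd g = 1) ∧
  (initialIdeal lt I =
    Ideal.span {m | ∃ g ∈ G, ∃ dd, IsInitialExp lt g dd ∧
      m = MvPolynomial.monomial dd (1 : K)}) ∧
  (∀ g ∈ G, ∀ g' ∈ G, g' ≠ g → ∀ d' ∈ g.support, ∀ dd, IsInitialExp lt g' dd → ¬ dd ≤ d')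

/-- The strict comparison of the (graded) reverse lexicographic order induced by
the ordering `x_{ord 0} < x_{ord 1} < ⋯ < x_{ord (n-1)}` of the variables:
`x < y` iff `deg x < deg y`, or the degrees agree and `x` has a strictly larger
exponent than `y` at the smallest variable where they differ. -/
def rlexLT {n : ℕ} (ord : Fin n ≃ Fin n) (x y : Fin n →₀ ℕ) : Prop :=
  expDeg x < expDeg y ∨ (expDeg x = expDeg y ∧
    ∃ p : Fin n, y (ord p) < x (ord p) ∧ ∀ q : Fin n, q < p → x (ord q) = y (ord q))

/-- `dd` is (the exponent vector of) a member of `G(I)`, the minimal system of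
monomial generators of the monomial ideal `I`: the monomial `x^dd` lies in `I`
but no proper divisor of it does. -/
def IsMinGen {K : Type} [Field K] {n : ℕ} (I : Ideal (MvPolynomial (Fin n) K))
    (dd : Fin n →₀ ℕ) : Prop :=
  MvPolynomial.monomial dd (1 : K) ∈ I ∧
  ∀ d' : Fin n →₀ ℕ, d' ≤ dd → d' ≠ dd → MvPolynomial.monomial d' (1 : K) ∉ I

/-- The toric ring `K[A]` is compressed: the initial ideal of `I_A` is radical
for every reverse lexicographic order. -/
def ToricCompressed (K : Type) [Field K] {n d : ℕ} (a : Fin n → (Fin d →₀ ℕ)) : Prop :=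
  ∀ ord : Fin n ≃ Fin n,
    (initialIdeal (rlexLT ord) (toricIdeal K a)).radical
      = initialIdeal (rlexLT ord) (toricIdeal K a)

/-- The strict comparison on exponent vectors associated to a monomial order. -/
def MonomialOrder.ltRel {σ : Type*} (m : MonomialOrder σ) :
    (σ →₀ ℕ) → (σ →₀ ℕ) → Prop :=
  fun a b => m.toSyn a < m.toSyn b

/-- A quadratic binomial: a difference of two (monic) monomials of degree 2. -/
def IsQuadBinomial {K : Type} [Field K] {n : ℕ} (g : MvPolynomial (Fin n) K) : Prop :=
  ∃ b c : Fin n →₀ ℕ, expDeg b = 2 ∧ expDeg c = 2 ∧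
    g = MvPolynomial.monomial b (1 : K) - MvPolynomial.monomial c (1 : K)

end

open MvPolynomial

noncomputable section

/-- The exponent vectors of the eight monomials
`A = {t_4, t_1 t_4, t_2 t_4, t_3 t_4, t_1 t_2 t_4, t_2 t_3 t_4, t_1 t_3 t_4,
t_1 t_2 t_3 t_4}` in `K[t_1, t_2, t_3, t_4]` (0-indexed variables `t`). -/
def stExp : Fin 8 → (Fin 4 →₀ ℕ)
  | 0 => Finsupp.single 3 1
  | 1 => Finsupp.single 0 1 + Finsupp.single 3 1
  | 2 => Finsupp.single 1 1 + Finsupp.single 3 1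
  | 3 => Finsupp.single 2 1 + Finsupp.single 3 1
  | 4 => Finsupp.single 0 1 + Finsupp.single 1 1 + Finsupp.single 3 1
  | 5 => Finsupp.single 1 1 + Finsupp.single 2 1 + Finsupp.single 3 1
  | 6 => Finsupp.single 0 1 + Finsupp.single 2 1 + Finsupp.single 3 1
  | 7 => Finsupp.single 0 1 + Finsupp.single 1 1 + Finsupp.single 2 1 + Finsupp.single 3 1

/-- The ordering `x_4 < x_3 < x_2 < x_1 < x_8 < x_7 < x_6 < x_5` of the
variables (0-indexed: `x_i` is variable `i - 1`); `ord13 p` is the `p`-th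
smallest variable. -/
def ord13 : Fin 8 ≃ Fin 8 :=
  ⟨![3, 2, 1, 0, 7, 6, 5, 4], ![3, 2, 1, 0, 7, 6, 5, 4], by decide, by decide⟩

set_option maxHeartbeats 1000000
set_option synthInstance.maxHeartbeats 1000000

namespace StableAux

def stF : Fin 8 → Fin 4 → ℕ := ![![0,0,0,1],![1,0,0,1],![0,1,0,1],![0,0,1,1],![1,1,0,1],![0,1,1,1],![1,0,1,1],![1,1,1,1]]

lemma stExp_apply (k : Fin 8) (i : Fin 4) : stExp k i = stF k i := by
  fin_cases k <;> fin_cases i <;>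
    simp [stExp, stF, Finsupp.single_apply, Finsupp.add_apply] <;> decide

/-- the semigroup condition -/
def sg (b : Fin 4 → ℕ) : Prop := ∀ i, b i ≤ b 3

lemma sg_add {b c : Fin 4 → ℕ} (hb : sg b) (hc : sg c) : sg (fun i => b i + c i) :=
  fun i => Nat.add_le_add (hb i) (hc i)

lemma sg_stF (k : Fin 8) : sg (stF k) := by fin_cases k <;> (intro i; fin_cases i <;> decide)

variable {K : Type} [Field K]

/-- the subalgebra of polynomials supported on the semigroup -/
def sgSub (K : Type) [Field K] : Subalgebra K (MvPolynomial (Fin 4) K) where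
  carrier := {f | ∀ b ∈ f.support, sg ⇑b}
  mul_mem' := by
    intro p q hp hq b hb
    obtain ⟨c, hc, d, hd, rfl⟩ := Finset.mem_add.1 (MvPolynomial.support_mul p q hb)
    intro i
    simpa using sg_add (hp c hc) (hq d hd) i
  add_mem' := by
    intro p q hp hq b hb
    rcases Finset.mem_union.1 (Finsupp.support_add hb) with h | h
    · exact hp b h
    · exact hq b h
  algebraMap_mem' := by
    intro r b hb
    have hb0 : b = 0 := by
      by_contra hne
      have h := MvPolynomial.mem_support_iff.1 hb
      rw [MvPolynomial.algebraMap_eq, MvPolynomial.coeff_C,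
        if_neg (fun h0 => hne h0.symm)] at h
      exact h rfl
    subst hb0
    intro i; simp

lemma g5 : ∀ w : Fin 4 → Fin 2, w 3 = 1 → ∃ k, ∀ i, stF k i = (w i : ℕ) := by
  unfold stF; decide

lemma monomial_mem_aux : ∀ (n : ℕ) (b : Fin 4 →₀ ℕ), b 3 = n → sg ⇑b →
    MvPolynomial.monomial b (1:K) ∈ toricRing K stExp := by
  intro n
  induction n with
  | zero =>
    intro b h3 hb
    have hb0 : b = 0 := Finsupp.ext fun i => by
      have h1 := hb i
      simp only [Finsupp.coe_zero, Pi.zero_apply]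
      omega
    subst hb0
    simpa using (toricRing K stExp).one_mem
  | succ n ih =>
    intro b h3 hb
    obtain ⟨k, hk⟩ := g5 (fun i => if b i = b 3 then 1 else 0) (by simp)
    have hk' : ∀ i, stF k i = if b i = b 3 then 1 else 0 := by
      intro i
      rw [hk i]
      split <;> simp_all
    have hle : ∀ i, stF k i ≤ b i := by
      intro i
      rw [hk' i]
      split <;> omega
    have hle' : ∀ i, stExp k i ≤ b i := fun i => by rw [stExp_apply]; exact hle i
    have h1 : stF k 3 = 1 := by rw [hk' 3]; simp
    have hsum : stExp k + (b - stExp k) = b := by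
      ext i
      rw [Finsupp.add_apply, Finsupp.tsub_apply]
      have := hle' i
      omega
    have hc3 : (b - stExp k) 3 = n := by
      rw [Finsupp.tsub_apply, stExp_apply, h1, h3]
      omega
    have hcsg : sg ⇑(b - stExp k) := by
      intro i
      rw [Finsupp.tsub_apply, Finsupp.tsub_apply, stExp_apply, stExp_apply, h1, hk' i]
      have := hb i
      split <;> omega
    have : MvPolynomial.monomial b (1:K)
        = MvPolynomial.monomial (stExp k) (1:K) * MvPolynomial.monomial (b - stExp k) (1:K) := by
      rw [MvPolynomial.monomial_mul, hsum, one_mul]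
    rw [this]
    exact mul_mem (Algebra.subset_adjoin (Set.mem_range_self k)) (ih _ hc3 hcsg)

lemma mem_toricRing_iff {f : MvPolynomial (Fin 4) K} :
    f ∈ toricRing K stExp ↔ ∀ b ∈ f.support, sg ⇑b := by
  constructor
  · intro hf
    have hle : toricRing K stExp ≤ sgSub K := by
      apply Algebra.adjoin_le
      rintro x ⟨k, rfl⟩ b hb
      have hb0 : b = stExp k := by
        by_contra hne
        have h := MvPolynomial.mem_support_iff.1 hb
        rw [MvPolynomial.coeff_monomial, if_neg (fun h0 => hne h0.symm)] at h
        exact h rfl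
      subst hb0
      intro i
      rw [stExp_apply, stExp_apply]
      exact sg_stF k i
    intro b hb
    exact hle hf b hb
  · intro h
    rw [← MvPolynomial.support_sum_monomial_coeff f]
    refine Subalgebra.sum_mem _ fun b hb => ?_
    have : MvPolynomial.monomial b (MvPolynomial.coeff b f)
        = MvPolynomial.C (MvPolynomial.coeff b f) * MvPolynomial.monomial b (1:K) := by
      rw [MvPolynomial.C_mul_monomial, mul_one]
    rw [this]
    exact mul_mem ((toricRing K stExp).algebraMap_mem _) (monomial_mem_aux (b 3) b rfl (h b hb))

lemma stF3 : ∀ k, stF k 3 = 1 := by unfold stF; decide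
lemma stF01 : ∀ k i, stF k i ≤ 1 := by unfold stF; decide

def Good (p T k : Fin 8) : Prop := ∀ i : Fin 4,
  (stF p i = 1 → stF T i = 0 → stF k i = 1) ∧ (stF T i = 1 → stF p i = 0 → stF k i = 0)

lemma g2 : ∀ p q : Fin 8, stF p = stF q → p = q := by unfold stF; decide

lemma g3 : ∀ p T k : Fin 8, Good p T k → ∃ m, ∀ i, stF k i + stF T i = stF p i + stF m i := by
  unfold Good stF; decide

/-- monomial dominated by some generator indexed in `P`, with quotient in the semigroup -/
def Dominated (P : Set (Fin 8)) (b : Fin 4 →₀ ℕ) : Prop :=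
  ∃ p ∈ P, (∀ i, stF p i ≤ b i) ∧ sg (fun i => b i - stF p i)

lemma coe_sg (x : toricRing K stExp) :
    ∀ b ∈ (x : MvPolynomial (Fin 4) K).support, sg ⇑b :=
  mem_toricRing_iff.1 x.2

set_option synthInstance.maxHeartbeats 1000000 in
set_option maxHeartbeats 1000000 in
lemma mem_span_iff (P : Set (Fin 8)) (y : toricRing K stExp) :
    y ∈ Ideal.span (toricGen K stExp '' P) ↔
      ∀ b ∈ (y : MvPolynomial (Fin 4) K).support, Dominated P b := by
  constructor
  · intro hy
    refine Submodule.span_induction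
      (p := fun (x : toricRing K stExp) _ => ∀ b ∈ (x : MvPolynomial (Fin 4) K).support, Dominated P b)
      ?_ ?_ ?_ ?_ hy
    · rintro x ⟨p, hp, rfl⟩ b hb
      have hb0 : b = stExp p := by
        by_contra hne
        have h := MvPolynomial.mem_support_iff.1 hb
        rw [show ((toricGen K stExp p : toricRing K stExp) : MvPolynomial (Fin 4) K)
            = MvPolynomial.monomial (stExp p) 1 from rfl] at h
        rw [MvPolynomial.coeff_monomial, if_neg (fun h0 => hne h0.symm)] at h
        exact h rfl
      subst hb0
      exact ⟨p, hp, fun i => by rw [stExp_apply],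
        fun i => by simp [stExp_apply]⟩
    · intro b hb
      simp only [ZeroMemClass.coe_zero, MvPolynomial.support_zero] at hb
      exact absurd hb (Finset.notMem_empty b)
    · intro x y _ _ hx hy b hb
      have : b ∈ ((x : MvPolynomial (Fin 4) K) + (y : MvPolynomial (Fin 4) K)).support := hb
      rcases Finset.mem_union.1 (Finsupp.support_add this) with h | h
      · exact hx b h
      · exact hy b h
    · intro a x _ hx b hb
      rw [smul_eq_mul] at hb
      rw [show ((a * x : toricRing K stExp) : MvPolynomial (Fin 4) K)
        = (a : MvPolynomial (Fin 4) K) * (x : MvPolynomial (Fin 4) K) from rfl] at hb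
      obtain ⟨c, hc, d, hd, rfl⟩ := Finset.mem_add.1 (MvPolynomial.support_mul _ _ hb)
      obtain ⟨p, hp, hle, hsg⟩ := hx d hd
      have hcs := coe_sg a c hc
      refine ⟨p, hp, fun i => ?_, fun i => ?_⟩
      · have := hle i
        rw [Finsupp.add_apply]
        omega
      · have h1 := hle i
        have h2 := hle 3
        have h3 : d i - stF p i ≤ d 3 - stF p 3 := hsg i
        have h4 := hcs i
        show (c + d) i - stF p i ≤ (c + d) 3 - stF p 3
        rw [Finsupp.add_apply, Finsupp.add_apply]
        omega
  · intro h
    have hmem : ∀ b ∈ (y : MvPolynomial (Fin 4) K).support,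
        MvPolynomial.monomial b (MvPolynomial.coeff b (y : MvPolynomial (Fin 4) K))
          ∈ toricRing K stExp := by
      intro b hb
      rw [mem_toricRing_iff]
      intro d hd
      have hd0 : d = b := by
        by_contra hne
        have h2 := MvPolynomial.mem_support_iff.1 hd
        rw [MvPolynomial.coeff_monomial, if_neg (fun h0 => hne h0.symm)] at h2
        exact h2 rfl
      subst hd0
      exact coe_sg y d hb
    have hrep : y = ∑ b ∈ (y : MvPolynomial (Fin 4) K).support.attach,
        (⟨MvPolynomial.monomial b.1 (MvPolynomial.coeff b.1 (y : MvPolynomial (Fin 4) K)),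
          hmem b.1 b.2⟩ : toricRing K stExp) := by
      apply Subtype.ext
      rw [AddSubmonoidClass.coe_finset_sum]
      simp only
      rw [Finset.sum_attach _ (fun b => MvPolynomial.monomial b
        (MvPolynomial.coeff b (y : MvPolynomial (Fin 4) K)))]
      exact (MvPolynomial.support_sum_monomial_coeff _).symm
    rw [hrep]
    refine Ideal.sum_mem _ fun b _ => ?_
    obtain ⟨p, hp, hle, hsg⟩ := h b.1 b.2
    have hle' : ∀ i, stExp p i ≤ b.1 i := fun i => by rw [stExp_apply]; exact hle i
    have hqmem : MvPolynomial.monomial (b.1 - stExp p)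
        (MvPolynomial.coeff b.1 (y : MvPolynomial (Fin 4) K)) ∈ toricRing K stExp := by
      rw [mem_toricRing_iff]
      intro d hd
      have hd0 : d = b.1 - stExp p := by
        by_contra hne
        have h2 := MvPolynomial.mem_support_iff.1 hd
        rw [MvPolynomial.coeff_monomial, if_neg (fun h0 => hne h0.symm)] at h2
        exact h2 rfl
      subst hd0
      intro i
      rw [Finsupp.tsub_apply, Finsupp.tsub_apply, stExp_apply, stExp_apply]
      exact hsg i
    have hfact : (⟨MvPolynomial.monomial b.1 (MvPolynomial.coeff b.1
          (y : MvPolynomial (Fin 4) K)), hmem b.1 b.2⟩ : toricRing K stExp)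
        = (⟨MvPolynomial.monomial (b.1 - stExp p) (MvPolynomial.coeff b.1
            (y : MvPolynomial (Fin 4) K)), hqmem⟩ : toricRing K stExp)
          * toricGen K stExp p := by
      apply Subtype.ext
      show MvPolynomial.monomial b.1 _
        = MvPolynomial.monomial (b.1 - stExp p) _ * MvPolynomial.monomial (stExp p) 1
      have hsub : b.1 - stExp p + stExp p = b.1 := by
        ext i
        rw [Finsupp.add_apply, Finsupp.tsub_apply]
        have := hle' i
        omega
      rw [MvPolynomial.monomial_mul, mul_one, hsub]
    rw [hfact]
    exact Ideal.mul_mem_left _ _ (Ideal.subset_span (Set.mem_image_of_mem _ hp))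
lemma g4 (p T : Fin 8) (hpT : stF p ≠ stF T) (b c : Fin 4 → ℕ) (hb : sg b) (hc : sg c)
    (h : ∀ i, b i + stF T i = stF p i + c i) :
    ∃ k, Good p T k ∧ (∀ i, stF k i ≤ b i) ∧ sg (fun i => b i - stF k i) := by
  have hb3 : 1 ≤ b 3 := by
    by_contra h0
    have hb0 : ∀ i, b i = 0 := fun i => by have := hb i; omega
    have hc3 : c 3 = 0 := by have := h 3; rw [stF3, stF3] at this; have := hb0 3; omega
    have hc0 : ∀ i, c i = 0 := fun i => by have := hc i; omega
    exact hpT (funext fun i => by have := h i; rw [hb0 i, hc0 i] at this; omega)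
  have hc3 : c 3 = b 3 := by have := h 3; rw [stF3, stF3] at this; omega
  obtain ⟨k, hk⟩ := g5 (fun i => if i = 3 then 1 else
    if (stF p i = 1 ∧ stF T i = 0) ∨ (b i = b 3 ∧ ¬(stF T i = 1 ∧ stF p i = 0)) then 1 else 0)
    (by simp)
  have hk' : ∀ i, i ≠ 3 → stF k i =
      if (stF p i = 1 ∧ stF T i = 0) ∨ (b i = b 3 ∧ ¬(stF T i = 1 ∧ stF p i = 0))
      then 1 else 0 := by
    intro i hi
    rw [hk i, if_neg hi]
    split <;> rfl
  refine ⟨k, ?_, ?_, ?_⟩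
  · intro i
    by_cases hi : i = 3
    · subst hi
      constructor
      · intro _ hT0; rw [stF3] at hT0; exact absurd hT0 one_ne_zero
      · intro _ hp0; rw [stF3] at hp0; exact absurd hp0 one_ne_zero
    · rw [hk' i hi]
      constructor
      · intro h1 h2
        rw [if_pos (Or.inl ⟨h1, h2⟩)]
      · intro h1 h2
        rw [if_neg]
        rintro (⟨hp1, -⟩ | ⟨-, hn⟩)
        · omega
        · exact hn ⟨h1, h2⟩
  · intro i
    by_cases hi : i = 3
    · subst hi; rw [stF3]; exact hb3
    · rw [hk' i hi]
      split
      · rename_i hcond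
        rcases hcond with ⟨h1, h2⟩ | ⟨h1, -⟩
        · have := h i; omega
        · omega
      · omega
  · intro i
    have hk3 : stF k 3 = 1 := stF3 k
    show b i - stF k i ≤ b 3 - stF k 3
    by_cases hi : i = 3
    · subst hi; omega
    · rw [hk' i hi, hk3]
      have hbi := hb i
      split
      · omega
      · rename_i hcond
        push_neg at hcond
        obtain ⟨hnd1, hnd2⟩ := hcond
        by_cases hbb : b i = b 3
        · have hTP := hnd2 hbb
          have := h i
          have := hc i
          have hT1 : stF T i ≤ 1 := stF01 T i
          have hp1 : stF p i ≤ 1 := stF01 p i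
          omega
        · omega

def Qset (P : Set (Fin 8)) (T : Fin 8) : Set (Fin 8) := {k | ∃ p ∈ P, Good p T k}

lemma colon_eq (P : Set (Fin 8)) (T : Fin 8) (hPT : ∀ p ∈ P, stF p ≠ stF T) :
    Submodule.colon (Ideal.span (toricGen K stExp '' P))
        (Ideal.span {toricGen K stExp T})
      = Ideal.span (toricGen K stExp '' Qset P T) := by
  apply le_antisymm
  · intro x hx
    rw [show (Ideal.span {toricGen K stExp T})
      = Submodule.span (toricRing K stExp) {toricGen K stExp T} from rfl,
      Submodule.mem_colon_span_singleton, smul_eq_mul] at hx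
    rw [mem_span_iff] at hx ⊢
    intro b hb
    have hbT : (b + stExp T) ∈
        ((x * toricGen K stExp T : toricRing K stExp) :
          MvPolynomial (Fin 4) K).support := by
      rw [show ((x * toricGen K stExp T : toricRing K stExp) : MvPolynomial (Fin 4) K)
        = (x : MvPolynomial (Fin 4) K) * MvPolynomial.monomial (stExp T) 1 from rfl]
      rw [MvPolynomial.mem_support_iff, MvPolynomial.coeff_mul_monomial, mul_one]
      exact MvPolynomial.mem_support_iff.1 hb
    obtain ⟨p, hp, hle, hsg⟩ := hx _ hbT
    have hle' : ∀ i, stF p i ≤ b i + stF T i := fun i => by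
      have := hle i
      rwa [Finsupp.add_apply, stExp_apply] at this
    have hsg' : sg (fun i => b i + stF T i - stF p i) := fun i => by
      have h1 : (b + stExp T) i - stF p i ≤ (b + stExp T) 3 - stF p 3 := hsg i
      rw [Finsupp.add_apply, Finsupp.add_apply, stExp_apply, stExp_apply] at h1
      exact h1
    obtain ⟨k, hGood, hkle, hksg⟩ := g4 p T (hPT p hp) ⇑b
      (fun i => b i + stF T i - stF p i) (coe_sg x b hb) hsg'
      (fun i => show b i + stF T i = stF p i + (b i + stF T i - stF p i) by
        have := hle' i; omega)
    exact ⟨k, ⟨p, hp, hGood⟩, hkle, hksg⟩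
  · rw [Ideal.span_le]
    rintro _ ⟨k, ⟨p, hp, hGood⟩, rfl⟩
    rw [SetLike.mem_coe, show (Ideal.span {toricGen K stExp T})
      = Submodule.span (toricRing K stExp) {toricGen K stExp T} from rfl,
      Submodule.mem_colon_span_singleton, smul_eq_mul]
    obtain ⟨m, hm⟩ := g3 p T k hGood
    have hprod : toricGen K stExp k * toricGen K stExp T
        = toricGen K stExp m * toricGen K stExp p := by
      apply Subtype.ext
      show MvPolynomial.monomial (stExp k) 1 * MvPolynomial.monomial (stExp T) 1
        = MvPolynomial.monomial (stExp m) 1 * MvPolynomial.monomial (stExp p) 1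
      rw [MvPolynomial.monomial_mul, MvPolynomial.monomial_mul, one_mul]
      have : stExp k + stExp T = stExp m + stExp p := by
        ext i
        rw [Finsupp.add_apply, Finsupp.add_apply, stExp_apply, stExp_apply,
          stExp_apply, stExp_apply]
        have := hm i
        omega
      rw [this]
    rw [hprod]
    exact Ideal.mul_mem_left _ _ (Ideal.subset_span (Set.mem_image_of_mem _ hp))

lemma stronglyKoszul : ToricStronglyKoszul K stExp := by
  intro r c hc j
  refine ⟨toricGen K stExp '' Qset (c '' {k | k < j}) (c j), ?_, ?_⟩
  · rintro _ ⟨k, -, rfl⟩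
    exact Set.mem_range_self k
  · rw [show ((fun k => toricGen K stExp (c k)) '' {k : Fin r | k < j})
      = toricGen K stExp '' (c '' {k : Fin r | k < j}) from (Set.image_image _ _ _).symm]
    apply colon_eq
    rintro _ ⟨k, hk, rfl⟩ heq
    exact absurd (g2 _ _ heq) (hc hk).ne
/-- image exponent vector under `π` -/
def AmapS (d : Fin 8 →₀ ℕ) : Fin 4 →₀ ℕ := ∑ k : Fin 8, d k • stExp k

lemma prod_monomial {ι : Type*} (s : Finset ι) (g : ι → (Fin 4 →₀ ℕ)) :
    (∏ k ∈ s, MvPolynomial.monomial (g k) (1:K))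
      = MvPolynomial.monomial (∑ k ∈ s, g k) 1 := by
  induction s using Finset.cons_induction with
  | empty => simp
  | cons a s ha ih =>
    rw [Finset.prod_cons, Finset.sum_cons, ih, MvPolynomial.monomial_mul, one_mul]

lemma pi_monomial (dd : Fin 8 →₀ ℕ) (cc : K) :
    MvPolynomial.aeval (fun i => (MvPolynomial.monomial (stExp i) (1:K)))
      (MvPolynomial.monomial dd cc) = MvPolynomial.monomial (AmapS dd) cc := by
  rw [MvPolynomial.aeval_monomial]
  have h1 : (dd.prod fun n e => (MvPolynomial.monomial (stExp n) (1:K))^e)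
      = MvPolynomial.monomial (AmapS dd) 1 := by
    rw [Finsupp.prod]
    rw [Finset.prod_congr rfl (fun n _ => by
      rw [MvPolynomial.monomial_pow, one_pow] :
        ∀ n ∈ dd.support, (MvPolynomial.monomial (stExp n) (1:K))^(dd n)
          = MvPolynomial.monomial (dd n • stExp n) 1)]
    rw [prod_monomial]
    have h2 : ∑ k ∈ dd.support, dd k • stExp k = AmapS dd :=
      Finset.sum_subset (Finset.subset_univ _) (fun k _ hk => by
        rw [Finsupp.notMem_support_iff.1 hk, zero_smul])
    rw [h2]
  rw [h1, MvPolynomial.algebraMap_eq, MvPolynomial.C_mul_monomial, mul_one]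

lemma fiber_exists {f : MvPolynomial (Fin 8) K} (hf : f ∈ toricIdeal K stExp)
    {e : Fin 8 →₀ ℕ} (he : e ∈ f.support) :
    ∃ e' ∈ f.support, e' ≠ e ∧ AmapS e' = AmapS e := by
  by_contra hcon
  push_neg at hcon
  have h0 : MvPolynomial.aeval (fun i => (MvPolynomial.monomial (stExp i) (1:K)))
      f = 0 := hf
  have h0' : ∑ d ∈ f.support,
      MvPolynomial.monomial (AmapS d) (MvPolynomial.coeff d f) = 0 := by
    rw [← Finset.sum_congr rfl (fun d _ => pi_monomial d (MvPolynomial.coeff d f)),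
      ← map_sum, MvPolynomial.support_sum_monomial_coeff, h0]
  have h2 := congrArg (MvPolynomial.coeff (AmapS e)) h0'
  rw [MvPolynomial.coeff_sum, MvPolynomial.coeff_zero] at h2
  rw [Finset.sum_eq_single_of_mem e he (fun d hd hde => by
    rw [MvPolynomial.coeff_monomial, if_neg (fun h => hcon d hd hde h)])] at h2
  rw [MvPolynomial.coeff_monomial, if_pos rfl] at h2
  exact MvPolynomial.mem_support_iff.1 he h2
def ddE : Fin 8 →₀ ℕ := Finsupp.single 1 1 + Finsupp.single 2 1 + Finsupp.single 7 1
def eeE : Fin 8 →₀ ℕ := Finsupp.single 3 1 + Finsupp.single 4 2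

lemma ddEv : ddE 0 = 0 ∧ ddE 1 = 1 ∧ ddE 2 = 1 ∧ ddE 3 = 0 ∧ ddE 4 = 0 ∧ ddE 5 = 0
    ∧ ddE 6 = 0 ∧ ddE 7 = 1 := by
  refine ⟨?_, ?_, ?_, ?_, ?_, ?_, ?_, ?_⟩ <;>
    simp [ddE, Finsupp.single_apply, Finsupp.add_apply]

lemma eeEv : eeE 0 = 0 ∧ eeE 1 = 0 ∧ eeE 2 = 0 ∧ eeE 3 = 1 ∧ eeE 4 = 2 ∧ eeE 5 = 0
    ∧ eeE 6 = 0 ∧ eeE 7 = 0 := by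
  refine ⟨?_, ?_, ?_, ?_, ?_, ?_, ?_, ?_⟩ <;>
    simp [eeE, Finsupp.single_apply, Finsupp.add_apply]

lemma AmapS_apply (d : Fin 8 →₀ ℕ) (i : Fin 4) :
    AmapS d i = ∑ k : Fin 8, d k * stF k i := by
  rw [AmapS, Finset.sum_apply']
  exact Finset.sum_congr rfl fun k _ => by
    rw [Finsupp.smul_apply, smul_eq_mul, stExp_apply]

lemma AmapS0 (d : Fin 8 →₀ ℕ) : AmapS d 0 = d 1 + d 4 + d 6 + d 7 := by
  rw [AmapS_apply, Fin.sum_univ_eight, (by decide : stF 0 0 = 0), (by decide : stF 1 0 = 1), (by decide : stF 2 0 = 0), (by decide : stF 3 0 = 0), (by decide : stF 4 0 = 1), (by decide : stF 5 0 = 0), (by decide : stF 6 0 = 1), (by decide : stF 7 0 = 1)]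
  omega

lemma AmapS1 (d : Fin 8 →₀ ℕ) : AmapS d 1 = d 2 + d 4 + d 5 + d 7 := by
  rw [AmapS_apply, Fin.sum_univ_eight, (by decide : stF 0 1 = 0), (by decide : stF 1 1 = 0), (by decide : stF 2 1 = 1), (by decide : stF 3 1 = 0), (by decide : stF 4 1 = 1), (by decide : stF 5 1 = 1), (by decide : stF 6 1 = 0), (by decide : stF 7 1 = 1)]
  omega

lemma AmapS2 (d : Fin 8 →₀ ℕ) : AmapS d 2 = d 3 + d 5 + d 6 + d 7 := by
  rw [AmapS_apply, Fin.sum_univ_eight, (by decide : stF 0 2 = 0), (by decide : stF 1 2 = 0), (by decide : stF 2 2 = 0), (by decide : stF 3 2 = 1), (by decide : stF 4 2 = 0), (by decide : stF 5 2 = 1), (by decide : stF 6 2 = 1), (by decide : stF 7 2 = 1)]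
  omega

lemma AmapS3 (d : Fin 8 →₀ ℕ) : AmapS d 3 = d 0 + d 1 + d 2 + d 3 + d 4 + d 5 + d 6 + d 7 := by
  rw [AmapS_apply, Fin.sum_univ_eight, (by decide : stF 0 3 = 1), (by decide : stF 1 3 = 1), (by decide : stF 2 3 = 1), (by decide : stF 3 3 = 1), (by decide : stF 4 3 = 1), (by decide : stF 5 3 = 1), (by decide : stF 6 3 = 1), (by decide : stF 7 3 = 1)]
  omega

lemma expDeg_eq (d : Fin 8 →₀ ℕ) : expDeg d = ∑ k : Fin 8, d k :=
  Finsupp.sum_fintype _ _ (fun _ => rfl)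

def ordF : Fin 8 → Fin 8 := ![3, 2, 1, 0, 7, 6, 5, 4]

def rlexF (x y : Fin 8 → ℕ) : Prop :=
  (∑ i, x i) < (∑ i, y i) ∨ ((∑ i, x i) = (∑ i, y i) ∧
    ∃ p : Fin 8, y (ordF p) < x (ordF p) ∧ ∀ q : Fin 8, q < p → x (ordF q) = y (ordF q))

lemma rlex_bridge {x y : Fin 8 →₀ ℕ} {xF yF : Fin 8 → ℕ}
    (hx : ∀ k, x k = xF k) (hy : ∀ k, y k = yF k) :
    rlexLT ord13 x y ↔ rlexF xF yF := by
  have hxe : ⇑x = xF := funext hx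
  have hye : ⇑y = yF := funext hy
  have hdx : expDeg x = ∑ i, xF i := by rw [expDeg_eq, ← hxe]
  have hdy : expDeg y = ∑ i, yF i := by rw [expDeg_eq, ← hye]
  have ho : ⇑ord13 = ordF := rfl
  unfold rlexLT rlexF
  rw [hdx, hdy, ho, hxe, hye]

lemma fin8_ext {v w : Fin 8 →₀ ℕ} (h0 : v 0 = w 0) (h1 : v 1 = w 1) (h2 : v 2 = w 2)
    (h3 : v 3 = w 3) (h4 : v 4 = w 4) (h5 : v 5 = w 5) (h6 : v 6 = w 6)
    (h7 : v 7 = w 7) : v = w :=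
  Finsupp.ext fun k => by fin_cases k <;> assumption

lemma fin8_forall {v : Fin 8 →₀ ℕ} {g : Fin 8 → ℕ} (h0 : v 0 = g 0) (h1 : v 1 = g 1)
    (h2 : v 2 = g 2) (h3 : v 3 = g 3) (h4 : v 4 = g 4) (h5 : v 5 = g 5)
    (h6 : v 6 = g 6) (h7 : v 7 = g 7) : ∀ k, v k = g k := fun k => by
  fin_cases k <;> assumption

lemma not_initial_proper (e : Fin 8 →₀ ℕ) (hle : e ≤ ddE) (hne : e ≠ ddE)
    {f : MvPolynomial (Fin 8) K} (hf : f ∈ toricIdeal K stExp) :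
    ¬ IsInitialExp (rlexLT ord13) f e := by
  rintro ⟨hsupp, hmax⟩
  obtain ⟨e', he', hne', hA⟩ := fiber_exists hf hsupp
  have hlt : rlexLT ord13 e' e := hmax e' he' hne'
  have hle' : ∀ k, e k ≤ ddE k := fun k => Finsupp.le_def.1 hle k
  obtain ⟨d0, d1, d2, d3, d4, d5, d6, d7⟩ := ddEv
  have h0 : e 0 = 0 := by have := hle' 0; omega
  have h3 : e 3 = 0 := by have := hle' 3; omega
  have h4 : e 4 = 0 := by have := hle' 4; omega
  have h5 : e 5 = 0 := by have := hle' 5; omega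
  have h6 : e 6 = 0 := by have := hle' 6; omega
  have h1 : e 1 ≤ 1 := by have := hle' 1; omega
  have h2 : e 2 ≤ 1 := by have := hle' 2; omega
  have h7 : e 7 ≤ 1 := by have := hle' 7; omega
  have q0 : e' 1 + e' 4 + e' 6 + e' 7 = e 1 + e 4 + e 6 + e 7 := by
    have := congrArg (fun v : Fin 4 →₀ ℕ => v 0) hA
    simpa only [AmapS0] using this
  have q1 : e' 2 + e' 4 + e' 5 + e' 7 = e 2 + e 4 + e 5 + e 7 := by
    have := congrArg (fun v : Fin 4 →₀ ℕ => v 1) hA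
    simpa only [AmapS1] using this
  have q2 : e' 3 + e' 5 + e' 6 + e' 7 = e 3 + e 5 + e 6 + e 7 := by
    have := congrArg (fun v : Fin 4 →₀ ℕ => v 2) hA
    simpa only [AmapS2] using this
  have q3 : e' 0 + e' 1 + e' 2 + e' 3 + e' 4 + e' 5 + e' 6 + e' 7
      = e 0 + e 1 + e 2 + e 3 + e 4 + e 5 + e 6 + e 7 := by
    have := congrArg (fun v : Fin 4 →₀ ℕ => v 3) hA
    simpa only [AmapS3] using this
  have hnall : ¬ (e 1 = 1 ∧ e 2 = 1 ∧ e 7 = 1) := by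
    rintro ⟨a1, a2, a7⟩
    exact hne (fin8_ext (by omega) (by omega) (by omega) (by omega) (by omega) (by omega) (by omega) (by omega))
  by_cases c1 : e 1 = 1 <;> by_cases c2 : e 2 = 1 <;> by_cases c7 : e 7 = 1
  · exact hnall ⟨c1, c2, c7⟩
  · have e7 : e 7 = 0 := by omega
    have hv : (e' 0 = 1 ∧ e' 1 = 0 ∧ e' 2 = 0 ∧ e' 3 = 0 ∧ e' 4 = 1 ∧ e' 5 = 0
        ∧ e' 6 = 0 ∧ e' 7 = 0) ∨ (e' 0 = 0 ∧ e' 1 = 1 ∧ e' 2 = 1 ∧ e' 3 = 0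
        ∧ e' 4 = 0 ∧ e' 5 = 0 ∧ e' 6 = 0 ∧ e' 7 = 0) := by omega
    rcases hv with ⟨v0, v1, v2, v3, v4, v5, v6, v7⟩ | ⟨w0, w1, w2, w3, w4, w5, w6, w7⟩
    · have hb := (rlex_bridge (x := e') (y := e) (xF := ![1,0,0,0,1,0,0,0])
        (yF := ![0,1,1,0,0,0,0,0])
        (fin8_forall (by rw [v0]; decide) (by rw [v1]; decide) (by rw [v2]; decide) (by rw [v3]; decide) (by rw [v4]; decide) (by rw [v5]; decide) (by rw [v6]; decide) (by rw [v7]; decide))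
        (fin8_forall (by rw [h0]; decide) (by rw [c1]; decide) (by rw [c2]; decide) (by rw [h3]; decide) (by rw [h4]; decide) (by rw [h5]; decide) (by rw [h6]; decide) (by rw [e7]; decide))).1 hlt
      revert hb; unfold rlexF ordF; decide
    · exact hne' (fin8_ext (by omega) (by omega) (by omega) (by omega) (by omega) (by omega) (by omega) (by omega))
  · have e2 : e 2 = 0 := by omega
    have hv : (e' 0 = 0 ∧ e' 1 = 0 ∧ e' 2 = 0 ∧ e' 3 = 0 ∧ e' 4 = 1 ∧ e' 5 = 0
        ∧ e' 6 = 1 ∧ e' 7 = 0) ∨ (e' 0 = 0 ∧ e' 1 = 1 ∧ e' 2 = 0 ∧ e' 3 = 0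
        ∧ e' 4 = 0 ∧ e' 5 = 0 ∧ e' 6 = 0 ∧ e' 7 = 1) := by omega
    rcases hv with ⟨v0, v1, v2, v3, v4, v5, v6, v7⟩ | ⟨w0, w1, w2, w3, w4, w5, w6, w7⟩
    · have hb := (rlex_bridge (x := e') (y := e) (xF := ![0,0,0,0,1,0,1,0])
        (yF := ![0,1,0,0,0,0,0,1])
        (fin8_forall (by rw [v0]; decide) (by rw [v1]; decide) (by rw [v2]; decide) (by rw [v3]; decide) (by rw [v4]; decide) (by rw [v5]; decide) (by rw [v6]; decide) (by rw [v7]; decide))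
        (fin8_forall (by rw [h0]; decide) (by rw [c1]; decide) (by rw [e2]; decide) (by rw [h3]; decide) (by rw [h4]; decide) (by rw [h5]; decide) (by rw [h6]; decide) (by rw [c7]; decide))).1 hlt
      revert hb; unfold rlexF ordF; decide
    · exact hne' (fin8_ext (by omega) (by omega) (by omega) (by omega) (by omega) (by omega) (by omega) (by omega))
  · exact hne' (fin8_ext (by omega) (by omega) (by omega) (by omega) (by omega) (by omega) (by omega) (by omega))
  · have e1 : e 1 = 0 := by omega
    have hv : (e' 0 = 0 ∧ e' 1 = 0 ∧ e' 2 = 0 ∧ e' 3 = 0 ∧ e' 4 = 1 ∧ e' 5 = 1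
        ∧ e' 6 = 0 ∧ e' 7 = 0) ∨ (e' 0 = 0 ∧ e' 1 = 0 ∧ e' 2 = 1 ∧ e' 3 = 0
        ∧ e' 4 = 0 ∧ e' 5 = 0 ∧ e' 6 = 0 ∧ e' 7 = 1) := by omega
    rcases hv with ⟨v0, v1, v2, v3, v4, v5, v6, v7⟩ | ⟨w0, w1, w2, w3, w4, w5, w6, w7⟩
    · have hb := (rlex_bridge (x := e') (y := e) (xF := ![0,0,0,0,1,1,0,0])
        (yF := ![0,0,1,0,0,0,0,1])
        (fin8_forall (by rw [v0]; decide) (by rw [v1]; decide) (by rw [v2]; decide) (by rw [v3]; decide) (by rw [v4]; decide) (by rw [v5]; decide) (by rw [v6]; decide) (by rw [v7]; decide))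
        (fin8_forall (by rw [h0]; decide) (by rw [e1]; decide) (by rw [c2]; decide) (by rw [h3]; decide) (by rw [h4]; decide) (by rw [h5]; decide) (by rw [h6]; decide) (by rw [c7]; decide))).1 hlt
      revert hb; unfold rlexF ordF; decide
    · exact hne' (fin8_ext (by omega) (by omega) (by omega) (by omega) (by omega) (by omega) (by omega) (by omega))
  · exact hne' (fin8_ext (by omega) (by omega) (by omega) (by omega) (by omega) (by omega) (by omega) (by omega))
  · exact hne' (fin8_ext (by omega) (by omega) (by omega) (by omega) (by omega) (by omega) (by omega) (by omega))
  · exact hne' (fin8_ext (by omega) (by omega) (by omega) (by omega) (by omega) (by omega) (by omega) (by omega))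
lemma fin4_ext {v w : Fin 4 →₀ ℕ} (h0 : v 0 = w 0) (h1 : v 1 = w 1) (h2 : v 2 = w 2)
    (h3 : v 3 = w 3) : v = w :=
  Finsupp.ext fun i => by fin_cases i <;> assumption

lemma dd_ne_ee : ddE ≠ eeE := by
  intro h
  have h3 : ddE 7 = eeE 7 := congrArg (fun v : Fin 8 →₀ ℕ => v 7) h
  obtain ⟨-, -, -, -, -, -, -, a7⟩ := ddEv
  obtain ⟨-, -, -, -, -, -, -, b7⟩ := eeEv
  omega

lemma hAeq : AmapS ddE = AmapS eeE := by
  obtain ⟨a0, a1, a2, a3, a4, a5, a6, a7⟩ := ddEv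
  obtain ⟨b0, b1, b2, b3, b4, b5, b6, b7⟩ := eeEv
  exact fin4_ext (by rw [AmapS0, AmapS0]; omega) (by rw [AmapS1, AmapS1]; omega)
    (by rw [AmapS2, AmapS2]; omega) (by rw [AmapS3, AmapS3]; omega)

lemma f0_mem : (MvPolynomial.monomial ddE (1:K) - MvPolynomial.monomial eeE 1)
    ∈ toricIdeal K stExp := by
  refine RingHom.mem_ker.2 ?_
  show MvPolynomial.aeval (fun i => (MvPolynomial.monomial (stExp i) (1:K)))
    (MvPolynomial.monomial ddE (1:K) - MvPolynomial.monomial eeE 1) = 0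
  rw [map_sub, pi_monomial, pi_monomial, hAeq, sub_self]

lemma f0_initial : IsInitialExp (rlexLT ord13)
    (MvPolynomial.monomial ddE (1:K) - MvPolynomial.monomial eeE 1) ddE := by
  constructor
  · rw [MvPolynomial.mem_support_iff, MvPolynomial.coeff_sub,
      MvPolynomial.coeff_monomial, if_pos rfl, MvPolynomial.coeff_monomial,
      if_neg (fun h => dd_ne_ee h.symm), sub_zero]
    exact one_ne_zero
  · intro d' hd' hne
    have hd'e : d' = eeE := by
      have h := MvPolynomial.mem_support_iff.1 hd'
      rw [MvPolynomial.coeff_sub, MvPolynomial.coeff_monomial,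
        MvPolynomial.coeff_monomial] at h
      by_contra hcon
      rw [if_neg (fun hh => hne hh.symm), if_neg (fun hh => hcon hh.symm)] at h
      exact h (by rw [sub_zero])
    subst hd'e
    obtain ⟨a0, a1, a2, a3, a4, a5, a6, a7⟩ := ddEv
    obtain ⟨b0, b1, b2, b3, b4, b5, b6, b7⟩ := eeEv
    rw [rlex_bridge (x := eeE) (y := ddE) (xF := ![0,0,0,1,2,0,0,0])
      (yF := ![0,1,1,0,0,0,0,1])
      (fin8_forall (by rw [b0]; decide) (by rw [b1]; decide) (by rw [b2]; decide)
        (by rw [b3]; decide) (by rw [b4]; decide) (by rw [b5]; decide)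
        (by rw [b6]; decide) (by rw [b7]; decide))
      (fin8_forall (by rw [a0]; decide) (by rw [a1]; decide) (by rw [a2]; decide)
        (by rw [a3]; decide) (by rw [a4]; decide) (by rw [a5]; decide)
        (by rw [a6]; decide) (by rw [a7]; decide))]
    unfold rlexF ordF
    decide

lemma initialIdeal_eq : initialIdeal (rlexLT ord13) (toricIdeal K stExp)
    = Ideal.span ((fun s => MvPolynomial.monomial s (1:K)) ''
        {e | ∃ f ∈ toricIdeal K stExp, IsInitialExp (rlexLT ord13) f e}) := by
  unfold initialIdeal
  congr 1
  ext m
  constructor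
  · rintro ⟨f, hf, dd, hdd, rfl⟩
    exact ⟨dd, ⟨f, hf, hdd⟩, rfl⟩
  · rintro ⟨dd, ⟨f, hf, hdd⟩, rfl⟩
    exact ⟨f, hf, dd, hdd, rfl⟩

lemma minGen : IsMinGen (initialIdeal (rlexLT ord13) (toricIdeal K stExp)) ddE := by
  constructor
  · exact Ideal.subset_span ⟨_, f0_mem, ddE, f0_initial, rfl⟩
  · intro d' hle hne hmem
    rw [initialIdeal_eq, MvPolynomial.mem_ideal_span_monomial_image] at hmem
    have hd : d' ∈ (MvPolynomial.monomial d' (1:K)).support := by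
      rw [MvPolynomial.mem_support_iff, MvPolynomial.coeff_monomial, if_pos rfl]
      exact one_ne_zero
    obtain ⟨e, ⟨f, hf, hinit⟩, hee⟩ := hmem d' hd
    have hele : e ≤ ddE := le_trans hee hle
    have hene : e ≠ ddE := fun h => hne (le_antisymm hle (h ▸ hee))
    exact not_initial_proper e hele hene hf hinit

lemma expDeg_ddE : expDeg ddE = 3 := by
  obtain ⟨a0, a1, a2, a3, a4, a5, a6, a7⟩ := ddEv
  rw [expDeg_eq, Fin.sum_univ_eight]
  omega

lemma noQuadGB (G : Finset (MvPolynomial (Fin 8) K))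
    (hG : IsReducedGB (rlexLT ord13) (toricIdeal K stExp) G) :
    ¬ ∀ g ∈ G, IsQuadBinomial g := by
  intro hquad
  obtain ⟨hGI, hmonic, hspan, hred⟩ := hG
  have hdd := (minGen (K := K)).1
  rw [hspan] at hdd
  have hset : {m | ∃ g ∈ G, ∃ dd, IsInitialExp (rlexLT ord13) g dd
        ∧ m = MvPolynomial.monomial dd (1:K)}
      = (fun s => MvPolynomial.monomial s (1:K)) ''
        {e | ∃ g ∈ G, IsInitialExp (rlexLT ord13) g e} := by
    ext m
    constructor
    · rintro ⟨g, hg, dd, hdd, rfl⟩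
      exact ⟨dd, ⟨g, hg, hdd⟩, rfl⟩
    · rintro ⟨dd, ⟨g, hg, hdd⟩, rfl⟩
      exact ⟨g, hg, dd, hdd, rfl⟩
  rw [hset, MvPolynomial.mem_ideal_span_monomial_image] at hdd
  have hddsupp : ddE ∈ (MvPolynomial.monomial ddE (1:K)).support := by
    rw [MvPolynomial.mem_support_iff, MvPolynomial.coeff_monomial, if_pos rfl]
    exact one_ne_zero
  obtain ⟨e, ⟨g, hg, hinit⟩, hee⟩ := hdd ddE hddsupp
  obtain ⟨b, c, hb2, hc2, hgbc⟩ := hquad g hg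
  have hesupp : e ∈ g.support := hinit.1
  have hebc : e = b ∨ e = c := by
    rw [hgbc] at hesupp
    have h := MvPolynomial.mem_support_iff.1 hesupp
    rw [MvPolynomial.coeff_sub, MvPolynomial.coeff_monomial,
      MvPolynomial.coeff_monomial] at h
    by_contra hcon
    push_neg at hcon
    rw [if_neg (fun hh => hcon.1 hh.symm), if_neg (fun hh => hcon.2 hh.symm)] at h
    exact h (by rw [sub_zero])
  have hdeg : expDeg e = 2 := by
    rcases hebc with rfl | rfl
    · exact hb2
    · exact hc2
  have hene : e ≠ ddE := by
    intro h
    rw [h, expDeg_ddE] at hdeg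
    omega
  have hmem : MvPolynomial.monomial e (1:K)
      ∈ initialIdeal (rlexLT ord13) (toricIdeal K stExp) :=
    Ideal.subset_span ⟨g, hGI g hg, e, hinit, rfl⟩
  exact (minGen (K := K)).2 e hee hene hmem

end StableAux

/-- **Example 1.7.**  For the toric ring of the stable set polytope of the
empty graph on three vertices, with respect to the reverse lexicographic order
induced by `x_4 < x_3 < x_2 < x_1 < x_8 < x_7 < x_6 < x_5`, the cubic monomial
`x_2 x_3 x_8` belongs to `G(in_rlex(I_A))`; in particular, the reduced Gröbner
basis of `I_A` with respect to this order is not quadratic — even though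
`K[A]` is strongly Koszul. -/
theorem stableSet_cubic_minGen_but_stronglyKoszul (K : Type) [Field K] :
    IsMinGen (initialIdeal (rlexLT ord13) (toricIdeal K stExp))
      (Finsupp.single 1 1 + Finsupp.single 2 1 + Finsupp.single 7 1) ∧
    (∀ G : Finset (MvPolynomial (Fin 8) K),
      IsReducedGB (rlexLT ord13) (toricIdeal K stExp) G →
        ¬ ∀ g ∈ G, IsQuadBinomial g) ∧
    ToricStronglyKoszul K stExp := by
  exact ⟨StableAux.minGen (K := K), fun G hG => StableAux.noQuadGB G hG,
    StableAux.stronglyKoszul (K := K)⟩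

end
end

section
/- Let K be a field and let A = {t_4, t_1 t_4, t_2 t_4, t_3 t_4, t_1 t_2 t_4, t_2 t_3 t_4, t_1 t_3 t_4, t_1 t_2 t_3 t_4} ⊆ K[t_1, t_2, t_3, t_4], with toric ideal I_A ⊆ K[x_1,...,x_8] (with x_1 ↦ t_4, x_2 ↦ t_1 t_4, x_3 ↦ t_2 t_4, x_4 ↦ t_3 t_4, x_5 ↦ t_1 t_2 t_4, x_6 ↦ t_2 t_3 t_4, x_7 ↦ t_1 t_3 t_4, x_8 ↦ t_1 t_2 t_3 t_4). Then I_A is generated by the nine binomials x_1 x_5 − x_2 x_3, x_1 x_6 − x_3 x_4, x_1 x_7 − x_2 x_4, x_5 x_6 − x_3 x_8, x_6 x_7 − x_4 x_8, x_5 x_7 − x_2 x_8, x_1 x_8 − x_4 x_5, x_2 x_6 − x_4 x_5, and x_3 x_7 − x_4 x_5. -/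
/-!
Common definitions: toric ideals/rings of monomial families, strong Koszulness
with respect to a system of algebra generators, initial ideals with respect to
a relation on exponent vectors, (reduced) Gröbner bases, the (graded) reverse
lexicographic order induced by an ordering of the variables, minimal monomial
generators, and compressedness.
-/

open MvPolynomial

open MvPolynomial

noncomputable section

namespace StAux

def bad : List (Fin 8 × Fin 8) :=
  [(1,2),(2,1),(1,3),(3,1),(2,3),(3,2),(1,5),(5,1),(2,6),(6,2),(3,4),(4,3),
   (4,5),(5,4),(4,6),(6,4),(5,6),(6,5)]

def Incomp (i j : Fin 8) : Prop := (i, j) ∈ bad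

instance (i j : Fin 8) : Decidable (Incomp i j) := by unfold Incomp; infer_instance

def ChainE (d : Fin 8 →₀ ℕ) : Prop := ∀ i j : Fin 8, Incomp i j → d i = 0 ∨ d j = 0

def w : Fin 8 → ℕ
  | 0 => 0 | 1 => 3 | 2 => 3 | 3 => 3 | 4 => 4 | 5 => 4 | 6 => 4 | 7 => 3

def μ (d : Fin 8 →₀ ℕ) : ℕ := ∑ i : Fin 8, w i * d i

def M (d : Fin 8 →₀ ℕ) : Fin 4 →₀ ℕ := ∑ i : Fin 8, d i • stExp i

lemma M_apply (d : Fin 8 →₀ ℕ) (t : Fin 4) : M d t = ∑ i : Fin 8, d i * stExp i t := by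
  rw [M, Finsupp.finset_sum_apply]
  simp [Finsupp.smul_apply]

lemma M_comp (d : Fin 8 →₀ ℕ) :
    M d 0 = d 1 + d 4 + d 6 + d 7 ∧ M d 1 = d 2 + d 4 + d 5 + d 7 ∧
    M d 2 = d 3 + d 5 + d 6 + d 7 ∧
    M d 3 = d 0 + d 1 + d 2 + d 3 + d 4 + d 5 + d 6 + d 7 := by
  refine ⟨?_, ?_, ?_, ?_⟩ <;>
    rw [M_apply, Fin.sum_univ_eight] <;>
    simp [stExp, Finsupp.single_apply]

set_option maxHeartbeats 1000000 in
lemma chain_vals (e : Fin 8 →₀ ℕ) (he : ChainE e) :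
    e 7 = min (M e 0) (min (M e 1) (M e 2)) ∧
    e 7 + e 4 = min (M e 0) (M e 1) ∧
    e 7 + e 5 = min (M e 1) (M e 2) ∧
    e 7 + e 6 = min (M e 0) (M e 2) := by
  obtain ⟨h0, h1, h2, h3⟩ := M_comp e
  have c12 := he 1 2 (by decide); have c13 := he 1 3 (by decide)
  have c23 := he 2 3 (by decide); have c15 := he 1 5 (by decide)
  have c26 := he 2 6 (by decide); have c34 := he 3 4 (by decide)
  have c45 := he 4 5 (by decide); have c46 := he 4 6 (by decide)
  have c56 := he 5 6 (by decide)
  rw [h0, h1, h2]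
  omega

lemma chain_inj (e e' : Fin 8 →₀ ℕ) (he : ChainE e) (he' : ChainE e')
    (h : M e = M e') : e = e' := by
  obtain ⟨h0, h1, h2, h3⟩ := M_comp e
  obtain ⟨h0', h1', h2', h3'⟩ := M_comp e'
  obtain ⟨v7, v4, v5, v6⟩ := chain_vals e he
  obtain ⟨u7, u4, u5, u6⟩ := chain_vals e' he'
  have E : ∀ t : Fin 4, M e t = M e' t := fun t => by rw [h]
  have E0 := E 0; have E1 := E 1; have E2 := E 2; have E3 := E 3
  have q7 : e 7 = e' 7 := by rw [v7, u7, E0, E1, E2]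
  have q4 : e 4 = e' 4 := by rw [E0, E1, ← u4] at v4; omega
  have q5 : e 5 = e' 5 := by rw [E1, E2, ← u5] at v5; omega
  have q6 : e 6 = e' 6 := by rw [E0, E2, ← u6] at v6; omega
  have q1 : e 1 = e' 1 := by rw [h0, h0'] at E0; omega
  have q2 : e 2 = e' 2 := by rw [h1, h1'] at E1; omega
  have q3 : e 3 = e' 3 := by rw [h2, h2'] at E2; omega
  have q0 : e 0 = e' 0 := by rw [h3, h3'] at E3; omega
  ext i
  fin_cases i
  exacts [q0, q1, q2, q3, q4, q5, q6, q7]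

variable (K : Type) [Field K]

def π : MvPolynomial (Fin 8) K →ₐ[K] MvPolynomial (Fin 4) K :=
  aeval fun i => monomial (stExp i) (1 : K)

lemma prod_monomial {ι : Type} (s : Finset ι) (g : ι → (Fin 4 →₀ ℕ)) :
    (∏ i ∈ s, monomial (g i) (1 : K)) = monomial (∑ i ∈ s, g i) 1 := by
  classical
  induction s using Finset.induction with
  | empty => simp [monomial_zero']
  | insert _ _ h ih =>
      rw [Finset.prod_insert h, Finset.sum_insert h, ih, monomial_mul, mul_one]

lemma pi_monomial (d : Fin 8 →₀ ℕ) (c : K) :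
    π K (monomial d c) = monomial (M d) c := by
  rw [π, aeval_monomial]
  rw [Finsupp.prod_fintype _ _ (fun i => pow_zero _)]
  have h : ∀ i : Fin 8, (monomial (stExp i) (1:K)) ^ d i = monomial (d i • stExp i) 1 := by
    intro i; rw [monomial_pow, one_pow]
  simp_rw [h]
  rw [prod_monomial, algebraMap_eq, C_mul_monomial, mul_one, M]

/-- The span of the nine binomials. -/
def J : Ideal (MvPolynomial (Fin 8) K) :=
  Ideal.span {(X 0 * X 4 - X 1 * X 2 : MvPolynomial (Fin 8) K),
        X 0 * X 5 - X 2 * X 3,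
        X 0 * X 6 - X 1 * X 3,
        X 4 * X 5 - X 2 * X 7,
        X 5 * X 6 - X 3 * X 7,
        X 4 * X 6 - X 1 * X 7,
        X 0 * X 7 - X 3 * X 4,
        X 1 * X 5 - X 3 * X 4,
        X 2 * X 6 - X 3 * X 4}

lemma mem_J (g : MvPolynomial (Fin 8) K)
    (hg : g = X 0 * X 4 - X 1 * X 2 ∨ g = X 0 * X 5 - X 2 * X 3 ∨
      g = X 0 * X 6 - X 1 * X 3 ∨ g = X 4 * X 5 - X 2 * X 7 ∨
      g = X 5 * X 6 - X 3 * X 7 ∨ g = X 4 * X 6 - X 1 * X 7 ∨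
      g = X 0 * X 7 - X 3 * X 4 ∨ g = X 1 * X 5 - X 3 * X 4 ∨
      g = X 2 * X 6 - X 3 * X 4) : g ∈ J K := by
  apply Ideal.subset_span
  simpa [Set.mem_insert_iff] using hg

set_option maxHeartbeats 1000000 in
/-- For each incomparable pair the corresponding rewrite binomial lies in `J`
and strictly drops the weight. -/
lemma ruleData (i j : Fin 8) (hij : Incomp i j) :
    ∃ k l : Fin 8, (X i * X j - X k * X l : MvPolynomial (Fin 8) K) ∈ J K ∧
      w k + w l < w i + w j := by
  have g1 : (X 0 * X 4 - X 1 * X 2 : MvPolynomial (Fin 8) K) ∈ J K := mem_J K _ (by tauto)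
  have g2 : (X 0 * X 5 - X 2 * X 3 : MvPolynomial (Fin 8) K) ∈ J K := mem_J K _ (by tauto)
  have g3 : (X 0 * X 6 - X 1 * X 3 : MvPolynomial (Fin 8) K) ∈ J K := mem_J K _ (by tauto)
  have g4 : (X 4 * X 5 - X 2 * X 7 : MvPolynomial (Fin 8) K) ∈ J K := mem_J K _ (by tauto)
  have g5 : (X 5 * X 6 - X 3 * X 7 : MvPolynomial (Fin 8) K) ∈ J K := mem_J K _ (by tauto)
  have g6 : (X 4 * X 6 - X 1 * X 7 : MvPolynomial (Fin 8) K) ∈ J K := mem_J K _ (by tauto)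
  have g7 : (X 0 * X 7 - X 3 * X 4 : MvPolynomial (Fin 8) K) ∈ J K := mem_J K _ (by tauto)
  have g8 : (X 1 * X 5 - X 3 * X 4 : MvPolynomial (Fin 8) K) ∈ J K := mem_J K _ (by tauto)
  have g9 : (X 2 * X 6 - X 3 * X 4 : MvPolynomial (Fin 8) K) ∈ J K := mem_J K _ (by tauto)
  have m15 : (X 1 * X 5 - X 0 * X 7 : MvPolynomial (Fin 8) K) ∈ J K := by
    have h := sub_mem g8 g7
    rwa [show (X 1 * X 5 - X 3 * X 4) - (X 0 * X 7 - X 3 * X 4)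
        = (X 1 * X 5 - X 0 * X 7 : MvPolynomial (Fin 8) K) by ring] at h
  have m26 : (X 2 * X 6 - X 0 * X 7 : MvPolynomial (Fin 8) K) ∈ J K := by
    have h := sub_mem g9 g7
    rwa [show (X 2 * X 6 - X 3 * X 4) - (X 0 * X 7 - X 3 * X 4)
        = (X 2 * X 6 - X 0 * X 7 : MvPolynomial (Fin 8) K) by ring] at h
  have neg : ∀ a b c d : Fin 8, (X a * X b - X c * X d : MvPolynomial (Fin 8) K) ∈ J K →
      (X c * X d - X a * X b : MvPolynomial (Fin 8) K) ∈ J K := by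
    intro a b c d h
    have h' := neg_mem h
    rwa [neg_sub] at h'
  have comm : ∀ a b c d : Fin 8, (X a * X b - X c * X d : MvPolynomial (Fin 8) K) ∈ J K →
      (X b * X a - X c * X d : MvPolynomial (Fin 8) K) ∈ J K := by
    intro a b c d h; rwa [mul_comm] at h
  have hw : ∀ a b x y : Fin 8, (X a * X b - X x * X y : MvPolynomial (Fin 8) K) ∈ J K →
      w x + w y < w a + w b →
      ∃ k l : Fin 8, (X a * X b - X k * X l : MvPolynomial (Fin 8) K) ∈ J K ∧
        w k + w l < w a + w b := fun a b x y h h' => ⟨x, y, h, h'⟩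
  simp only [Incomp, bad, List.mem_cons, List.not_mem_nil, or_false,
    Prod.mk.injEq] at hij
  rcases hij with ⟨rfl,rfl⟩|⟨rfl,rfl⟩|⟨rfl,rfl⟩|⟨rfl,rfl⟩|⟨rfl,rfl⟩|⟨rfl,rfl⟩|⟨rfl,rfl⟩|
    ⟨rfl,rfl⟩|⟨rfl,rfl⟩|⟨rfl,rfl⟩|⟨rfl,rfl⟩|⟨rfl,rfl⟩|⟨rfl,rfl⟩|⟨rfl,rfl⟩|⟨rfl,rfl⟩|
    ⟨rfl,rfl⟩|⟨rfl,rfl⟩|⟨rfl,rfl⟩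
  · exact hw _ _ _ _ (neg _ _ _ _ g1) (by decide)
  · exact hw _ _ _ _ (comm _ _ _ _ (neg _ _ _ _ g1)) (by decide)
  · exact hw _ _ _ _ (neg _ _ _ _ g3) (by decide)
  · exact hw _ _ _ _ (comm _ _ _ _ (neg _ _ _ _ g3)) (by decide)
  · exact hw _ _ _ _ (neg _ _ _ _ g2) (by decide)
  · exact hw _ _ _ _ (comm _ _ _ _ (neg _ _ _ _ g2)) (by decide)
  · exact hw _ _ _ _ m15 (by decide)
  · exact hw _ _ _ _ (comm _ _ _ _ m15) (by decide)
  · exact hw _ _ _ _ m26 (by decide)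
  · exact hw _ _ _ _ (comm _ _ _ _ m26) (by decide)
  · exact hw _ _ _ _ (neg _ _ _ _ g7) (by decide)
  · exact hw _ _ _ _ (comm _ _ _ _ (neg _ _ _ _ g7)) (by decide)
  · exact hw _ _ _ _ g4 (by decide)
  · exact hw _ _ _ _ (comm _ _ _ _ g4) (by decide)
  · exact hw _ _ _ _ g6 (by decide)
  · exact hw _ _ _ _ (comm _ _ _ _ g6) (by decide)
  · exact hw _ _ _ _ g5 (by decide)
  · exact hw _ _ _ _ (comm _ _ _ _ g5) (by decide)

lemma μ_add (a b : Fin 8 →₀ ℕ) : μ (a + b) = μ a + μ b := by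
  simp [μ, Finsupp.add_apply, mul_add, Finset.sum_add_distrib]

lemma μ_single (i : Fin 8) : μ (Finsupp.single i 1) = w i := by
  simp [μ, Finsupp.single_apply, mul_ite, Finset.sum_ite_eq']

lemma exists_chain (d : Fin 8 →₀ ℕ) :
    ∃ e : Fin 8 →₀ ℕ, ChainE e ∧
      (monomial d (1 : K) - monomial e 1) ∈ J K := by
  generalize hN : μ d = N
  induction N using Nat.strong_induction_on generalizing d with
  | _ N ih =>
    by_cases hc : ChainE d
    · exact ⟨d, hc, by simp⟩
    · rw [ChainE] at hc
      push_neg at hc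
      obtain ⟨i, j, hij, hdi, hdj⟩ := hc
      have hne : i ≠ j := by
        rintro rfl
        exact (by decide : ∀ k : Fin 8, ¬ Incomp k k) i hij
      have hle : Finsupp.single i 1 + Finsupp.single j 1 ≤ d := by
        rw [Finsupp.le_def]
        intro a
        rw [Finsupp.add_apply]
        rcases eq_or_ne i a with rfl | h1
        · rw [Finsupp.single_eq_same, Finsupp.single_eq_of_ne' (Ne.symm hne)]
          omega
        · rw [Finsupp.single_eq_of_ne' h1]
          rcases eq_or_ne j a with rfl | h2
          · rw [Finsupp.single_eq_same]; omega
          · rw [Finsupp.single_eq_of_ne' h2]; omega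
      obtain ⟨b, hb⟩ := exists_add_of_le hle
      obtain ⟨k, l, hkl_mem, hkl_w⟩ := ruleData K i j hij
      set d' : Fin 8 →₀ ℕ := b + (Finsupp.single k 1 + Finsupp.single l 1) with hd'
      have key : monomial d (1 : K) - monomial d' 1
          = monomial b 1 * (X i * X j - X k * X l) := by
        rw [mul_sub]
        rw [show (X i : MvPolynomial (Fin 8) K) = monomial (Finsupp.single i 1) 1 from rfl]
        rw [show (X j : MvPolynomial (Fin 8) K) = monomial (Finsupp.single j 1) 1 from rfl]
        rw [show (X k : MvPolynomial (Fin 8) K) = monomial (Finsupp.single k 1) 1 from rfl]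
        rw [show (X l : MvPolynomial (Fin 8) K) = monomial (Finsupp.single l 1) 1 from rfl]
        rw [monomial_mul, monomial_mul, monomial_mul, monomial_mul]
        rw [hd', hb, add_comm b (Finsupp.single i 1 + Finsupp.single j 1)]
        simp only [one_mul, mul_one]
      have hμd : μ d = μ b + (w i + w j) := by
        rw [hb, μ_add, μ_add, μ_single, μ_single]; ring
      have hμd' : μ d' = μ b + (w k + w l) := by
        rw [hd', μ_add, μ_add, μ_single, μ_single]
      have hlt : μ d' < N := by omega
      obtain ⟨e, he, hmem⟩ := ih (μ d') hlt d' rfl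
      refine ⟨e, he, ?_⟩
      have hsum := add_mem (Ideal.mul_mem_left _ (monomial b 1) hkl_mem) hmem
      rwa [← key, sub_add_sub_cancel] at hsum

lemma chain_poly_zero (g : MvPolynomial (Fin 8) K)
    (hsupp : ∀ d ∈ g.support, ChainE d) (h : π K g = 0) : g = 0 := by
  ext e
  rw [coeff_zero]
  by_cases he : e ∈ g.support
  · have key : coeff (M e) (π K g) = coeff e g := by
      conv_lhs => rw [show g = ∑ d ∈ g.support, monomial d (coeff d g) from
        (support_sum_monomial_coeff g).symm]
      rw [map_sum]
      simp_rw [pi_monomial]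
      rw [coeff_sum]
      simp_rw [coeff_monomial]
      rw [Finset.sum_eq_single e]
      · rw [if_pos rfl]
      · intro d hd hde
        rw [if_neg]
        intro hMd
        exact hde (chain_inj d e (hsupp d hd) (hsupp e he) hMd)
      · intro h'; exact absurd he h'
    rw [h, coeff_zero] at key
    exact key.symm
  · rwa [notMem_support_iff] at he

lemma J_le_ker : J K ≤ RingHom.ker (π K).toRingHom := by
  rw [J, Ideal.span_le]
  have aux : ∀ i j k l : Fin 8, stExp i + stExp j = stExp k + stExp l →
      (X i * X j - X k * X l : MvPolynomial (Fin 8) K) ∈ RingHom.ker (π K).toRingHom := by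
    intro i j k l h
    rw [RingHom.mem_ker]
    show π K (X i * X j - X k * X l) = 0
    rw [map_sub, map_mul, map_mul]
    rw [show (π K) (X i) = monomial (stExp i) 1 from aeval_X _ i]
    rw [show (π K) (X j) = monomial (stExp j) 1 from aeval_X _ j]
    rw [show (π K) (X k) = monomial (stExp k) 1 from aeval_X _ k]
    rw [show (π K) (X l) = monomial (stExp l) 1 from aeval_X _ l]
    rw [monomial_mul, monomial_mul, h, sub_self]
  rintro g hg
  simp only [Set.mem_insert_iff, Set.mem_singleton_iff] at hg
  rcases hg with rfl|rfl|rfl|rfl|rfl|rfl|rfl|rfl|rfl <;>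
    refine aux _ _ _ _ ?_ <;>
    (ext t; fin_cases t <;> simp [stExp, Finsupp.single_apply])

lemma ker_le_J : RingHom.ker (π K).toRingHom ≤ J K := by
  intro f hf
  rw [RingHom.mem_ker] at hf
  choose nf hnf1 hnf2 using exists_chain K
  set g : MvPolynomial (Fin 8) K := ∑ d ∈ f.support, monomial (nf d) (coeff d f) with hgdef
  have hfg : f - g ∈ J K := by
    have hrw : (∑ d ∈ f.support,
        C (coeff d f) * (monomial d 1 - monomial (nf d) 1)) = f - g := by
      calc (∑ d ∈ f.support, C (coeff d f) * (monomial d 1 - monomial (nf d) 1))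
          = ∑ d ∈ f.support,
              (monomial d (coeff d f) - monomial (nf d) (coeff d f)) :=
            Finset.sum_congr rfl fun d _ => by
              rw [mul_sub, C_mul_monomial, C_mul_monomial, mul_one]
        _ = f - g := by
            rw [Finset.sum_sub_distrib, support_sum_monomial_coeff, hgdef]
    rw [← hrw]
    exact Ideal.sum_mem _ fun d _ => Ideal.mul_mem_left _ _ (hnf2 d)
  have hf' : π K f = 0 := hf
  have hg_ker : π K g = 0 := by
    have h1 : π K (f - g) = 0 := J_le_ker K hfg
    rw [map_sub, hf', zero_sub, neg_eq_zero] at h1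
    exact h1
  have hg_supp : ∀ d ∈ g.support, ChainE d := by
    intro d hd
    rw [hgdef] at hd
    have := MvPolynomial.support_sum hd
    rw [Finset.mem_biUnion] at this
    obtain ⟨d', _, hd'⟩ := this
    have := support_monomial_subset hd'
    rw [Finset.mem_singleton] at this
    rw [this]
    exact hnf1 d'
  have hg0 : g = 0 := chain_poly_zero K g hg_supp hg_ker
  have : f = f - g := by rw [hg0, sub_zero]
  rw [this]
  exact hfg

end StAux

/-- **Example 1.7 (generators).**  The toric ideal of
`K[A] = K[t_4, t_1 t_4, t_2 t_4, t_3 t_4, t_1 t_2 t_4, t_2 t_3 t_4, t_1 t_3 t_4,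
t_1 t_2 t_3 t_4]` is generated by the nine binomials `x_1 x_5 - x_2 x_3`,
`x_1 x_6 - x_3 x_4`, `x_1 x_7 - x_2 x_4`, `x_5 x_6 - x_3 x_8`,
`x_6 x_7 - x_4 x_8`, `x_5 x_7 - x_2 x_8`, `x_1 x_8 - x_4 x_5`,
`x_2 x_6 - x_4 x_5`, `x_3 x_7 - x_4 x_5` (variables 0-indexed below). -/
theorem stableSet_toricIdeal_generators (K : Type) [Field K] :
    toricIdeal K stExp =
      Ideal.span {(X 0 * X 4 - X 1 * X 2 : MvPolynomial (Fin 8) K),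
        X 0 * X 5 - X 2 * X 3,
        X 0 * X 6 - X 1 * X 3,
        X 4 * X 5 - X 2 * X 7,
        X 5 * X 6 - X 3 * X 7,
        X 4 * X 6 - X 1 * X 7,
        X 0 * X 7 - X 3 * X 4,
        X 1 * X 5 - X 3 * X 4,
        X 2 * X 6 - X 3 * X 4} := by
  apply le_antisymm
  · exact StAux.ker_le_J K
  · exact StAux.J_le_ker K

end
end
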